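/- Kerov polynomial for k = 3: let A be a commutative ℚ-algebra, R_2, R_3, … ∈ A, L(ζ) = ζ + Σ_{j≥2} R_j ζ^{1-j}, H the compositional inverse of L, and Σ_k := -(1/k) [z^{-1}] H(z) H(z-1) ⋯ H(z-k+1). Then Σ_3 = R_4 + R_2. -/

import Mathlib

noncomputable section

variable {A : Type*}

/-- The formal derivative `d/dz` of a formal series at infinity. A series at infinity
`f(z) = Σ_{n ≤ N} a_n z^n` is modeled as a `LaurentSeries` in the variable `w = 1/z`,
so that the coefficient of `z^n` is `f.coeff (-n)`; the derivative satisfies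
`(derivZ f).coeff m = (1 - m) • f.coeff (m - 1)`. -/
noncomputable def derivZ [CommRing A] (f : LaurentSeries A) : LaurentSeries A where
  coeff m := (1 - m) • f.coeff (m - 1)
  isPWO_support' := by
    refine (f.isPWO_support.image_of_monotone (f := fun n => n + 1)
      (fun a b hab => by simpa using hab)).mono ?_
    intro m hm
    have hf : f.coeff (m - 1) ≠ 0 := by
      intro h
      simp [Function.mem_support, h] at hm
    exact ⟨m - 1, by simpa [HahnSeries.mem_support] using hf, by ring⟩

lemma coeff_sum [CommRing A] (s : Finset ℕ) (F : ℕ → LaurentSeries A) (m : ℤ) :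
    (∑ r ∈ s, F r).coeff m = ∑ r ∈ s, (F r).coeff m := by
  induction s using Finset.cons_induction with
  | empty => simp
  | cons a s ha ih => simp [Finset.sum_insert ha, HahnSeries.coeff_add, ih]

lemma mul_coeff_Icc [CommRing A] (f g : LaurentSeries A) (a b k : ℤ)
    (hf : ∀ m : ℤ, m < a → f.coeff m = 0) (hg : ∀ m : ℤ, m < b → g.coeff m = 0) :
    (f * g).coeff k = ∑ i ∈ Finset.Icc a (k - b), f.coeff i * g.coeff (k - i) := by
  classical
  rw [HahnSeries.coeff_mul]
  have himg : ∑ i ∈ Finset.Icc a (k - b), f.coeff i * g.coeff (k - i)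
      = ∑ ij ∈ (Finset.Icc a (k - b)).image (fun i => (i, k - i)), f.coeff ij.1 * g.coeff ij.2 := by
    rw [Finset.sum_image]
    intro x _ y _ h
    simpa using congrArg Prod.fst h
  rw [himg]
  refine Finset.sum_subset ?_ ?_
  · intro ij hij
    rw [Finset.mem_addAntidiagonal] at hij
    obtain ⟨h1, h2, h3⟩ := hij
    have hfa : a ≤ ij.1 := by
      by_contra hc
      exact h1 (hf ij.1 (by omega))
    have hgb : b ≤ ij.2 := by
      by_contra hc
      exact h2 (hg ij.2 (by omega))
    simp only [Finset.mem_image, Finset.mem_Icc]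
    exact ⟨ij.1, ⟨hfa, by omega⟩, by ext <;> simp <;> omega⟩
  · intro ij hij hnotin
    rw [Finset.mem_addAntidiagonal] at hnotin
    simp only [Finset.mem_image, Finset.mem_Icc] at hij
    obtain ⟨i, hi, rfl⟩ := hij
    simp only [Function.mem_support, not_and] at hnotin
    by_cases hf0 : f.coeff i = 0
    · simp [hf0]
    by_cases hg0 : g.coeff (k - i) = 0
    · simp [hg0]
    exact absurd (by ring) (hnotin hf0 hg0)

lemma mul_coeff_eq_zero [CommRing A] (f g : LaurentSeries A) (a b k : ℤ)
    (hf : ∀ m : ℤ, m < a → f.coeff m = 0) (hg : ∀ m : ℤ, m < b → g.coeff m = 0)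
    (hk : k < a + b) : (f * g).coeff k = 0 := by
  rw [mul_coeff_Icc f g a b k hf hg, Finset.Icc_eq_empty (by omega), Finset.sum_empty]

lemma derivZ_coeff [CommRing A] (f : LaurentSeries A) (m : ℤ) :
    (derivZ f).coeff m = (1 - m) • f.coeff (m - 1) := rfl

lemma derivZ_iterate_coeff [CommRing A] (f : LaurentSeries A) (r : ℕ) (m : ℤ) :
    (derivZ^[r] f).coeff m
      = (∏ i ∈ Finset.range r, ((i : ℤ) + 1 - m)) • f.coeff (m - r) := by
  induction r generalizing m with
  | zero => simp
  | succ r ih =>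
    rw [Function.iterate_succ_apply', derivZ_coeff, ih, smul_smul,
      Finset.prod_range_succ']
    have h1 : (∏ i ∈ Finset.range r, ((i : ℤ) + 1 - (m - 1)))
        = ∏ i ∈ Finset.range r, ((i + 1 : ℤ) + 1 - m) := by
      apply Finset.prod_congr rfl
      intro i _
      ring
    have h2 : m - 1 - (r : ℤ) = m - ((r : ℕ) + 1 : ℕ) := by push_cast; ring
    rw [h1, h2]
    congr 1
    push_cast
    ring

/-- `IsSumOf g F` asserts that the formal series at infinity `g` is the coefficientwise
convergent sum `Σ_{r ≥ 0} F r`: for each coefficient, the partial sums eventually stabilize. -/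
def IsSumOf [CommRing A] (g : LaurentSeries A) (F : ℕ → LaurentSeries A) : Prop :=
  ∀ m : ℤ, ∃ N : ℕ, ∀ n : ℕ, N ≤ n → g.coeff m = (∑ r ∈ Finset.range n, F r).coeff m

/-- Kerov polynomial for `k = 3`: over a commutative `ℚ`-algebra `A`
with `R_2, R_3, … ∈ A`, `L(ζ) = ζ + Σ_{j≥2} R_j ζ^{1-j}`, `H` the compositional
inverse of `L` (so `H(L(ζ)) = ζ`), and
`Σ_k = -(1/k)[z^{-1}] H(z) H(z-1) ⋯ H(z-k+1)` where
`H(z-j) = Σ_{r≥0} ((-j)^r/r!) H^{(r)}(z)`, one has `Σ_3 = R_4 + R_2` (in informal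
notation). -/
theorem kerov_polynomial_three [CommRing A] [Algebra ℚ A]
    (B R : ℕ → A) (H L : LaurentSeries A) (Hshift : ℕ → LaurentSeries A)
    (hH : ∀ m : ℤ, H.coeff m =
      if m = -1 then 1 else if 1 ≤ m then -B (m + 1).toNat else 0)
    (hL : ∀ m : ℤ, L.coeff m =
      if m = -1 then 1 else if 1 ≤ m then R (m + 1).toNat else 0)
    (hcomp : IsSumOf (HahnSeries.single (-1) 1)
      (fun s => ((Nat.factorial s : ℚ))⁻¹ •
        ((L - HahnSeries.single (-1) 1) ^ s * derivZ^[s] H)))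
    (hHshift : ∀ j : ℕ, IsSumOf (Hshift j)
      (fun r => ((-(j : ℚ)) ^ r / (Nat.factorial r : ℚ)) • derivZ^[r] H)) :
    -((3 : ℚ))⁻¹ • (∏ j ∈ Finset.range 3, Hshift j).coeff 1 = R 4 + R 2 := by
  classical
  have ht1 : Int.toNat 1 = 1 := rfl
  have ht2 : Int.toNat 2 = 2 := rfl
  have ht3 : Int.toNat 3 = 3 := rfl
  have ht4 : Int.toNat 4 = 4 := rfl
  have ht5 : Int.toNat 5 = 5 := rfl
  -- Basic facts about the coefficients of `H`
  have hHlow : ∀ m : ℤ, m < -1 → H.coeff m = 0 := by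
    intro m hm
    rw [hH, if_neg (by omega), if_neg (by omega)]
  have hHm1 : H.coeff (-1) = 1 := by rw [hH]; norm_num [ht1, ht2, ht3, ht4, ht5]
  have hH0 : H.coeff 0 = 0 := by rw [hH]; norm_num [ht1, ht2, ht3, ht4, ht5]
  have hH1 : H.coeff 1 = -B 2 := by rw [hH]; norm_num [ht1, ht2, ht3, ht4, ht5]
  have hH2 : H.coeff 2 = -B 3 := by rw [hH]; norm_num [ht1, ht2, ht3, ht4, ht5]
  have hH3 : H.coeff 3 = -B 4 := by rw [hH]; norm_num [ht1, ht2, ht3, ht4, ht5]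
  -- Closed formula for the coefficients of the shifted series
  have hsf : ∀ (j : ℕ) (m : ℤ), (Hshift j).coeff m =
      ∑ r ∈ Finset.range (m + 2).toNat,
        ((-(j : ℚ)) ^ r / (Nat.factorial r : ℚ)) •
          ((∏ i ∈ Finset.range r, ((i : ℤ) + 1 - m)) • H.coeff (m - r)) := by
    intro j m
    obtain ⟨N, hN⟩ := hHshift j m
    rw [hN (N + (m + 2).toNat) (Nat.le_add_right _ _), coeff_sum]
    refine (Finset.sum_subset (Finset.range_subset_range.2 (Nat.le_add_left _ _)) ?_).symm.trans
      (Finset.sum_congr rfl ?_)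
    · intro r _ hr
      rw [Finset.mem_range, not_lt] at hr
      have h0 : H.coeff (m - r) = 0 := by
        apply hHlow
        omega
      rw [HahnSeries.coeff_smul, derivZ_iterate_coeff, h0, smul_zero, smul_zero]
    · intro r _
      rw [HahnSeries.coeff_smul, derivZ_iterate_coeff]
  have hs_low : ∀ (j : ℕ) (m : ℤ), m < -1 → (Hshift j).coeff m = 0 := by
    intro j m hm
    rw [hsf]
    refine Finset.sum_eq_zero fun r _ => ?_
    have h0 : H.coeff (m - r) = 0 := by
      apply hHlow
      omega
    rw [h0, smul_zero, smul_zero]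
  -- Values of the coefficients of the shifted series
  have hsm1 : ∀ j : ℕ, (Hshift j).coeff (-1) = 1 := by
    intro j
    rw [hsf]
    norm_num [ht1, ht2, ht3, ht4, ht5, hHm1]
  have hs1 : ∀ j : ℕ, (Hshift j).coeff 1 = -B 2 := by
    intro j
    rw [hsf]
    norm_num [ht1, ht2, ht3, ht4, ht5, Finset.sum_range_succ, Finset.prod_range_succ, hH1, hH0, hHm1]
  have hs00 : (Hshift 0).coeff 0 = 0 := by
    rw [hsf]; norm_num [ht1, ht2, ht3, ht4, ht5, Finset.sum_range_succ, Finset.prod_range_succ, hH0, hHm1]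
  have hs01 : (Hshift 1).coeff 0 = -1 := by
    rw [hsf]
    norm_num [ht1, ht2, ht3, ht4, ht5, Finset.sum_range_succ, Finset.prod_range_succ, hH0, hHm1,
      Algebra.smul_def, map_neg, map_one]
  have hs02 : (Hshift 2).coeff 0 = -2 := by
    rw [hsf]
    norm_num [ht1, ht2, ht3, ht4, ht5, Finset.sum_range_succ, Finset.prod_range_succ, hH0, hHm1,
      Algebra.smul_def, map_neg, map_ofNat]
  have hs20 : (Hshift 0).coeff 2 = -B 3 := by
    rw [hsf]
    norm_num [ht1, ht2, ht3, ht4, ht5, Finset.sum_range_succ, Finset.prod_range_succ, hH2, hH1, hH0, hHm1]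
  have hs21 : (Hshift 1).coeff 2 = -B 3 - B 2 := by
    rw [hsf]
    norm_num [ht1, ht2, ht3, ht4, ht5, Finset.sum_range_succ, Finset.prod_range_succ, hH2, hH1, hH0, hHm1,
      Algebra.smul_def, map_neg, map_one]
    ring
  have hs22 : (Hshift 2).coeff 2 = -B 3 - 2 * B 2 := by
    rw [hsf]
    norm_num [ht1, ht2, ht3, ht4, ht5, Finset.sum_range_succ, Finset.prod_range_succ, hH2, hH1, hH0, hHm1,
      Algebra.smul_def, map_neg, map_ofNat]
    ring
  have hs30 : (Hshift 0).coeff 3 = -B 4 := by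
    rw [hsf]
    norm_num [ht1, ht2, ht3, ht4, ht5, Finset.sum_range_succ, Finset.prod_range_succ, hH3, hH2, hH1, hH0, hHm1]
  have hhalf : (algebraMap ℚ A) (1 / 2) * 2 = 1 := by
    rw [← map_ofNat (algebraMap ℚ A) 2, ← map_mul]
    norm_num
  have hs31 : (Hshift 1).coeff 3 = -B 4 - 2 * B 3 - B 2 := by
    rw [hsf]
    norm_num [ht1, ht2, ht3, ht4, ht5, Finset.sum_range_succ, Finset.prod_range_succ, hH3, hH2, hH1, hH0, hHm1,
      Algebra.smul_def, map_neg, map_one, map_ofNat]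
    linear_combination (-B 2) * hhalf
  have hs32 : (Hshift 2).coeff 3 = -B 4 - 4 * B 3 - 4 * B 2 := by
    rw [hsf]
    norm_num [ht1, ht2, ht3, ht4, ht5, Finset.sum_range_succ, Finset.prod_range_succ, hH3, hH2, hH1, hH0, hHm1,
      Algebra.smul_def, map_neg, map_one, map_ofNat]
    ring
  -- The composition identity determines `B` in terms of `R`
  have hMlow : ∀ m : ℤ, m < 1 → (L - HahnSeries.single (-1) 1).coeff m = 0 := by
    intro m hm
    rw [HahnSeries.coeff_sub, hL, HahnSeries.coeff_single]
    by_cases h : m = -1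
    · subst h; norm_num
    · rw [if_neg h, if_neg (by omega), if_neg h, sub_zero]
  have hMval : ∀ m : ℤ, 1 ≤ m → (L - HahnSeries.single (-1) 1).coeff m = R (m + 1).toNat := by
    intro m hm
    rw [HahnSeries.coeff_sub, hL, HahnSeries.coeff_single,
      if_neg (by omega), if_pos hm, if_neg (by omega), sub_zero]
  have hDlow : ∀ (s : ℕ) (m : ℤ), m < (s : ℤ) - 1 → (derivZ^[s] H).coeff m = 0 := by
    intro s m hm
    rw [derivZ_iterate_coeff, hHlow _ (by omega), smul_zero]
  have hPowLow : ∀ (s : ℕ) (m : ℤ), m < (s : ℤ) →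
      ((L - HahnSeries.single (-1) 1) ^ s).coeff m = 0 := by
    intro s
    induction s with
    | zero =>
      intro m hm
      rw [pow_zero, HahnSeries.coeff_one, if_neg (by omega)]
    | succ s ih =>
      intro m hm
      rw [pow_succ]
      exact mul_coeff_eq_zero _ _ (s : ℤ) 1 m ih hMlow (by push_cast; omega)
  have hkey : ∀ m : ℤ, 1 ≤ m → m ≤ 3 → (0 : A) = ∑ s ∈ Finset.range 3,
      (((Nat.factorial s : ℚ))⁻¹ •
        ((L - HahnSeries.single (-1) 1) ^ s * derivZ^[s] H)).coeff m := by
    intro m hm1 hm3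
    obtain ⟨N, hN⟩ := hcomp m
    have h := hN (N + 3) (Nat.le_add_right _ _)
    rw [coeff_sum] at h
    rw [HahnSeries.coeff_single, if_neg (by omega)] at h
    rw [h]
    refine (Finset.sum_subset (Finset.range_subset_range.2 (Nat.le_add_left _ _)) ?_).symm
    intro s _ hs
    rw [Finset.mem_range, not_lt] at hs
    rw [HahnSeries.coeff_smul,
      mul_coeff_eq_zero _ _ (s : ℤ) ((s : ℤ) - 1) m (hPowLow s) (hDlow s) (by omega),
      smul_zero]
  have hDH0 : (derivZ H).coeff 0 = 1 := by
    rw [derivZ_coeff]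
    norm_num [ht1, ht2, ht3, ht4, ht5, hHm1]
  have hDH1 : (derivZ H).coeff 1 = 0 := by
    rw [derivZ_coeff]
    norm_num
  have hDH2 : (derivZ H).coeff 2 = B 2 := by
    rw [derivZ_coeff]
    norm_num [hH1]
  have hD2H1 : (derivZ^[2] H).coeff 1 = 0 := by
    rw [derivZ_iterate_coeff]
    norm_num [ht1, ht2, ht3, ht4, ht5, Finset.prod_range_succ]
  have hB2 : B 2 = R 2 := by
    have h := hkey 1 (by norm_num) (by norm_num)
    rw [Finset.sum_range_succ, Finset.sum_range_succ, Finset.sum_range_one] at h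
    rw [HahnSeries.coeff_smul, HahnSeries.coeff_smul, HahnSeries.coeff_smul] at h
    rw [pow_zero, one_mul, Function.iterate_zero, id_eq, hH1] at h
    rw [pow_one,
      mul_coeff_Icc _ _ 1 0 1 hMlow (fun m hm => hDlow 1 m (by push_cast; omega))] at h
    rw [mul_coeff_eq_zero _ _ 2 1 1 (hPowLow 2) (fun m hm => hDlow 2 m (by push_cast; omega))
      (by norm_num)] at h
    rw [show Finset.Icc (1 : ℤ) (1 - 0) = {1} by decide] at h
    rw [Finset.sum_singleton, hMval 1 le_rfl] at h
    norm_num [ht2, Function.iterate_one, hDH0] at h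
    linear_combination h
  have hB3 : B 3 = R 3 := by
    have h := hkey 2 (by norm_num) (by norm_num)
    rw [Finset.sum_range_succ, Finset.sum_range_succ, Finset.sum_range_one] at h
    rw [HahnSeries.coeff_smul, HahnSeries.coeff_smul, HahnSeries.coeff_smul] at h
    rw [pow_zero, one_mul, Function.iterate_zero, id_eq, hH2] at h
    rw [pow_one,
      mul_coeff_Icc _ _ 1 0 2 hMlow (fun m hm => hDlow 1 m (by push_cast; omega))] at h
    rw [mul_coeff_eq_zero _ _ 2 1 2 (hPowLow 2) (fun m hm => hDlow 2 m (by push_cast; omega))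
      (by norm_num)] at h
    rw [show Finset.Icc (1 : ℤ) (2 - 0) = {1, 2} by decide] at h
    rw [Finset.sum_insert (by decide), Finset.sum_singleton,
      hMval 1 le_rfl, hMval 2 (by norm_num)] at h
    norm_num [ht1, ht2, ht3, ht4, ht5, Function.iterate_one, hDH0, hDH1] at h
    linear_combination h
  have hB4 : B 4 = R 4 + R 2 * R 2 := by
    have h := hkey 3 (by norm_num) (by norm_num)
    rw [Finset.sum_range_succ, Finset.sum_range_succ, Finset.sum_range_one] at h
    rw [HahnSeries.coeff_smul, HahnSeries.coeff_smul, HahnSeries.coeff_smul] at h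
    rw [pow_zero, one_mul, Function.iterate_zero, id_eq, hH3] at h
    rw [pow_one,
      mul_coeff_Icc _ _ 1 0 3 hMlow (fun m hm => hDlow 1 m (by push_cast; omega))] at h
    rw [mul_coeff_Icc _ _ 2 1 3 (hPowLow 2)
      (fun m hm => hDlow 2 m (by push_cast; omega))] at h
    rw [show Finset.Icc (1 : ℤ) (3 - 0) = {1, 2, 3} by decide,
      show Finset.Icc (2 : ℤ) (3 - 1) = {2} by decide] at h
    rw [Finset.sum_insert (by decide), Finset.sum_insert (by decide),
      Finset.sum_singleton, Finset.sum_singleton,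
      hMval 1 le_rfl, hMval 2 (by norm_num), hMval 3 (by norm_num)] at h
    rw [show (3:ℤ) - 2 = 1 by norm_num, hD2H1, mul_zero, smul_zero] at h
    norm_num [ht1, ht2, ht3, ht4, ht5, Function.iterate_one, hDH0, hDH1, hDH2, hB2] at h
    linear_combination h
  -- coefficients of `Hshift 0 * Hshift 1`
  have hQlow : ∀ m : ℤ, m < -2 → (Hshift 0 * Hshift 1).coeff m = 0 := by
    intro m hm
    exact mul_coeff_eq_zero _ _ (-1) (-1) m (hs_low 0) (hs_low 1) (by omega)
  have hQcoeff : ∀ k : ℤ, (Hshift 0 * Hshift 1).coeff k =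
      ∑ i ∈ Finset.Icc (-1 : ℤ) (k - -1), (Hshift 0).coeff i * (Hshift 1).coeff (k - i) :=
    fun k => mul_coeff_Icc _ _ (-1) (-1) k (hs_low 0) (hs_low 1)
  have hQm2 : (Hshift 0 * Hshift 1).coeff (-2) = 1 := by
    rw [hQcoeff, show Finset.Icc (-1 : ℤ) (-2 - -1) = {-1} by decide, Finset.sum_singleton]
    norm_num [ht1, ht2, ht3, ht4, ht5, hsm1]
  have hQm1 : (Hshift 0 * Hshift 1).coeff (-1) = -1 := by
    rw [hQcoeff, show Finset.Icc (-1 : ℤ) (-1 - -1) = {-1, 0} by decide,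
      Finset.sum_insert (by decide), Finset.sum_singleton]
    norm_num [ht1, ht2, ht3, ht4, ht5, hsm1, hs00, hs01]
  have hQ0 : (Hshift 0 * Hshift 1).coeff 0 = -(2 * B 2) := by
    rw [hQcoeff, show Finset.Icc (-1 : ℤ) (0 - -1) = {-1, 0, 1} by decide,
      Finset.sum_insert (by decide), Finset.sum_insert (by decide), Finset.sum_singleton]
    norm_num [ht1, ht2, ht3, ht4, ht5, hsm1, hs00, hs01, hs1]
    ring
  have hQ1 : (Hshift 0 * Hshift 1).coeff 1 = -(2 * B 3) := by
    rw [hQcoeff, show Finset.Icc (-1 : ℤ) (1 - -1) = {-1, 0, 1, 2} by decide,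
      Finset.sum_insert (by decide), Finset.sum_insert (by decide),
      Finset.sum_insert (by decide), Finset.sum_singleton]
    norm_num [ht1, ht2, ht3, ht4, ht5, hsm1, hs00, hs01, hs1, hs20, hs21]
    ring
  have hQ2 : (Hshift 0 * Hshift 1).coeff 2 = -(2 * B 4) - B 3 - B 2 + B 2 * B 2 := by
    rw [hQcoeff, show Finset.Icc (-1 : ℤ) (2 - -1) = {-1, 0, 1, 2, 3} by decide,
      Finset.sum_insert (by decide), Finset.sum_insert (by decide),
      Finset.sum_insert (by decide), Finset.sum_insert (by decide), Finset.sum_singleton]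
    norm_num [ht1, ht2, ht3, ht4, ht5, hsm1, hs00, hs01, hs1, hs20, hs21, hs30, hs31]
    ring
  -- the coefficient of `z^{-1}` in the triple product
  have hP : (Hshift 0 * Hshift 1 * Hshift 2).coeff 1 =
      (3 : ℚ) • (B 2 * B 2 - B 4 - B 2) := by
    rw [mul_coeff_Icc _ _ (-2) (-1) 1 hQlow (hs_low 2),
      show Finset.Icc (-2 : ℤ) (1 - -1) = {-2, -1, 0, 1, 2} by decide,
      Finset.sum_insert (by decide), Finset.sum_insert (by decide),
      Finset.sum_insert (by decide), Finset.sum_insert (by decide), Finset.sum_singleton]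
    norm_num [ht1, ht2, ht3, ht4, ht5, hQm2, hQm1, hQ0, hQ1, hQ2, hsm1, hs02, hs1, hs22, hs32]
    rw [Algebra.smul_def, map_ofNat]
    ring
  have hprod : (∏ j ∈ Finset.range 3, Hshift j) = Hshift 0 * Hshift 1 * Hshift 2 := by
    rw [Finset.prod_range_succ, Finset.prod_range_succ, Finset.prod_range_one]
  rw [hprod, hP, smul_smul]
  norm_num
  rw [hB4, hB2]
  ring
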